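/- Let U* ⊆ ℝⁿ⁺¹ be open, Y : U* → U = Y(U*) a C² diffeomorphism with J := det DY > 0, Z : U* → GL(M+1, ℝ) a C¹ matrix field. Suppose q^k : U → ℝⁿ⁺¹ and r^k : U → ℝ (k = 0..M) and q*^l, r*^l on U* are related by qᵏᵢ ∘ Y = (1/J) Σ_{j,l} Y_{i,j} Z_{kl} q*ˡⱼ and rᵏ ∘ Y = (1/J)(Σ_{j,l} ∂ⱼZ_{kl} q*ˡⱼ + Σₗ Z_{kl} r*ˡ). Then for every compactly supported C¹ test family ζ : U → ℝ^{M+1} with ζ* := Zᵀ (ζ ∘ Y): Σₗ ∫_{U*} (Σⱼ ∂ⱼζ*ₗ · q*ˡⱼ + ζ*ₗ r*ˡ) = Σₖ ∫_U (Σᵢ ∂ᵢζₖ · qᵏᵢ + ζₖ rᵏ). (Invariance of weak divergence systems under observer transformations.) -/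

import Mathlib

open Matrix MeasureTheory

lemma sum4_comm {α β γ δ : Type*} [Fintype α] [Fintype β] [Fintype γ] [Fintype δ]
    (f : α → β → γ → δ → ℝ) :
    ∑ a, ∑ b, ∑ c, ∑ d, f a b c d = ∑ c, ∑ d, ∑ b, ∑ a, f a b c d := by
  simp only [← Fintype.sum_prod_type']
  exact Fintype.sum_equiv
    ⟨fun x => (x.2.2.1, x.2.2.2, x.2.1, x.1), fun y => (y.2.2.2, y.2.2.1, y.1, y.2.1),
      by rintro ⟨a, b, c, d⟩; rfl, by rintro ⟨c, d, b, a⟩; rfl⟩ _ _ (by rintro ⟨a, b, c, d⟩; rfl)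

lemma sum2_comm {α β : Type*} [Fintype α] [Fintype β] (f : α → β → ℝ) :
    ∑ a, ∑ b, f a b = ∑ b, ∑ a, f a b := Finset.sum_comm

lemma sum3_comm' {α β γ : Type*} [Fintype α] [Fintype β] [Fintype γ]
    (f : α → β → γ → ℝ) :
    ∑ a, ∑ b, ∑ c, f a b c = ∑ c, ∑ b, ∑ a, f a b c := by
  simp only [← Fintype.sum_prod_type']
  exact Fintype.sum_equiv
    ⟨fun x => (x.2.2, x.2.1, x.1), fun y => (y.2.2, y.2.1, y.1),
      by rintro ⟨a, b, c⟩; rfl, by rintro ⟨c, b, a⟩; rfl⟩ _ _ (by rintro ⟨a, b, c⟩; rfl)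

lemma key_sum (N K : ℕ) (a : Fin K → Fin N → ℝ) (b : Fin K → ℝ)
    (c : Fin K → Fin K → Fin N → ℝ) (Zm : Fin K → Fin K → ℝ)
    (D : Fin N → Fin N → ℝ) (Q : Fin K → Fin N → ℝ) (R : Fin K → ℝ) :
    ∑ l : Fin K, ((∑ j : Fin N,
        (∑ k : Fin K, ((Zm k l * ∑ i : Fin N, D i j * a k i) + b k * c k l j)) * Q l j)
        + (∑ k : Fin K, Zm k l * b k) * R l)
    = ∑ k : Fin K, ((∑ i : Fin N, a k i * (∑ j : Fin N, ∑ l : Fin K, D i j * Zm k l * Q l j))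
        + b k * ((∑ j : Fin N, ∑ l : Fin K, c k l j * Q l j) + ∑ l : Fin K, Zm k l * R l)) := by
  simp only [Finset.sum_mul, Finset.mul_sum, Finset.sum_add_distrib, mul_add, add_mul]
  rw [add_assoc]
  congr 1
  · exact (sum4_comm fun l j k i => Zm k l * (D i j * a k i) * Q l j).trans
      (Finset.sum_congr rfl fun k _ => Finset.sum_congr rfl fun i _ =>
        Finset.sum_congr rfl fun j _ => Finset.sum_congr rfl fun l _ => by ring)
  congr 1
  · exact (sum3_comm' fun l j k => b k * c k l j * Q l j).trans
      (Finset.sum_congr rfl fun k _ => Finset.sum_congr rfl fun j _ =>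
        Finset.sum_congr rfl fun l _ => by ring)
  · exact (sum2_comm fun l k => Zm k l * b k * R l).trans
      (Finset.sum_congr rfl fun k _ => Finset.sum_congr rfl fun l _ => by ring)

lemma clm_apply_sum {m : ℕ} (L : (Fin m → ℝ) →L[ℝ] ℝ) (v : Fin m → ℝ) :
    L v = ∑ i, v i * L (Pi.single i 1) := by
  have hv : v = ∑ i, v i • (Pi.single i 1 : Fin m → ℝ) := by
    funext j
    simp [Finset.sum_apply, Pi.single_apply]
  conv_lhs => rw [hv]
  rw [map_sum]
  simp [smul_eq_mul]

theorem stmt18 (n M : ℕ)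
    (Ustar U : Set (Fin (n + 1) → ℝ)) (hUstar : IsOpen Ustar) (hU : IsOpen U)
    (Y : (Fin (n + 1) → ℝ) → (Fin (n + 1) → ℝ))
    (hYsmooth : ContDiffOn ℝ 2 Y Ustar)
    (hYimage : Y '' Ustar = U) (hYinj : Set.InjOn Y Ustar)
    (DY : (Fin (n + 1) → ℝ) → Matrix (Fin (n + 1)) (Fin (n + 1)) ℝ)
    (hDY : ∀ y i j, DY y i j = fderiv ℝ (fun z => Y z i) y (Pi.single j 1))
    (J : (Fin (n + 1) → ℝ) → ℝ) (hJ : ∀ y, J y = (DY y).det)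
    (hJpos : ∀ y ∈ Ustar, 0 < J y)
    (Z : (Fin (n + 1) → ℝ) → Matrix (Fin (M + 1)) (Fin (M + 1)) ℝ)
    (hZ : ∀ k l, ContDiff ℝ 1 (fun y => Z y k l))
    (hZinv : ∀ y, IsUnit (Z y).det)
    (q : Fin (M + 1) → (Fin (n + 1) → ℝ) → (Fin (n + 1) → ℝ))
    (r : Fin (M + 1) → (Fin (n + 1) → ℝ) → ℝ)
    (qstar : Fin (M + 1) → (Fin (n + 1) → ℝ) → (Fin (n + 1) → ℝ))
    (rstar : Fin (M + 1) → (Fin (n + 1) → ℝ) → ℝ)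
    (hqcont : ∀ k i, Continuous (fun y => q k y i))
    (hrcont : ∀ k, Continuous (r k))
    (hqstarcont : ∀ l j, Continuous (fun y => qstar l y j))
    (hrstarcont : ∀ l, Continuous (rstar l))
    (hqrel : ∀ y ∈ Ustar, ∀ (k : Fin (M + 1)) (i : Fin (n + 1)),
      q k (Y y) i = (1 / J y) * ∑ j : Fin (n + 1), ∑ l : Fin (M + 1),
        DY y i j * Z y k l * qstar l y j)
    (hrrel : ∀ y ∈ Ustar, ∀ k : Fin (M + 1),
      r k (Y y) = (1 / J y) *
        ((∑ j : Fin (n + 1), ∑ l : Fin (M + 1),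
          fderiv ℝ (fun z => Z z k l) y (Pi.single j 1) * qstar l y j)
         + ∑ l : Fin (M + 1), Z y k l * rstar l y))
    (ζ : (Fin (n + 1) → ℝ) → (Fin (M + 1) → ℝ))
    (hζ : ∀ k, ContDiff ℝ 1 (fun y => ζ y k))
    (hζsupp : HasCompactSupport ζ) (hζU : tsupport ζ ⊆ U)
    (ζstar : (Fin (n + 1) → ℝ) → (Fin (M + 1) → ℝ))
    (hζstar : ∀ y, ζstar y = (Z y)ᵀ.mulVec (ζ (Y y))) :
    ∫ y in Ustar, (∑ l : Fin (M + 1),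
        ((∑ j : Fin (n + 1),
          fderiv ℝ (fun z => ζstar z l) y (Pi.single j 1) * qstar l y j)
         + ζstar y l * rstar l y))
    = ∫ y in U, (∑ k : Fin (M + 1),
        ((∑ i : Fin (n + 1),
          fderiv ℝ (fun z => ζ z k) y (Pi.single i 1) * q k y i)
         + ζ y k * r k y)) := by
  classical
  set g : (Fin (n + 1) → ℝ) → ℝ := fun x => ∑ k : Fin (M + 1),
      ((∑ i : Fin (n + 1), fderiv ℝ (fun z => ζ z k) x (Pi.single i 1) * q k x i)
        + ζ x k * r k x) with hg
  -- differentiability of Y at points of Ustar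
  have hYd : ∀ y ∈ Ustar, HasFDerivAt Y (fderiv ℝ Y y) y := fun y hy =>
    ((hYsmooth.differentiableOn (by norm_num)).differentiableAt (hUstar.mem_nhds hy)).hasFDerivAt
  have hcomp : ∀ y ∈ Ustar, ∀ i j, (fderiv ℝ Y y) (Pi.single j 1) i = DY y i j := by
    intro y hy i j
    rw [hDY]
    have h1 : HasFDerivAt (fun z => Y z i)
        ((ContinuousLinearMap.proj (R := ℝ) (φ := fun _ : Fin (n + 1) => ℝ) i).comp
          (fderiv ℝ Y y)) y :=
      (ContinuousLinearMap.proj (R := ℝ) (φ := fun _ : Fin (n + 1) => ℝ) i).hasFDerivAt.comp y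
        (hYd y hy)
    rw [h1.fderiv]; rfl
  have hdet : ∀ y ∈ Ustar, (fderiv ℝ Y y).det = J y := by
    intro y hy
    have hm : DY y = LinearMap.toMatrix'
        ((fderiv ℝ Y y) : (Fin (n + 1) → ℝ) →ₗ[ℝ] (Fin (n + 1) → ℝ)) := by
      ext i j
      rw [LinearMap.toMatrix'_apply]
      have h2 : (fun j' => if j' = j then (1 : ℝ) else 0) = Pi.single j 1 := by
        funext j'; simp [Pi.single_apply]
      exact (hcomp y hy i j).symm
    rw [hJ, hm, LinearMap.det_toMatrix']
  -- change of variables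
  have hchg : ∫ x in U, g x = ∫ y in Ustar, |(fderiv ℝ Y y).det| • g (Y y) := by
    rw [← hYimage]
    exact integral_image_eq_integral_abs_det_fderiv_smul volume hUstar.measurableSet
      (fun y hy => (hYd y hy).hasFDerivWithinAt) hYinj g
  rw [hchg]
  -- pointwise identity on Ustar
  refine setIntegral_congr_fun hUstar.measurableSet fun y hy => ?_
  have hJne : J y ≠ 0 := (hJpos y hy).ne'
  -- derivative of ζstar components
  have hzder : ∀ (l : Fin (M + 1)) (j : Fin (n + 1)),
      fderiv ℝ (fun z => ζstar z l) y (Pi.single j 1)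
      = ∑ k : Fin (M + 1),
          ((Z y k l * ∑ i : Fin (n + 1),
              DY y i j * fderiv ℝ (fun x => ζ x k) (Y y) (Pi.single i 1))
            + ζ (Y y) k * fderiv ℝ (fun z => Z z k l) y (Pi.single j 1)) := by
    intro l j
    have hfun : (fun z => ζstar z l) = fun z => ∑ k : Fin (M + 1), Z z k l * ζ (Y z) k := by
      funext z
      rw [hζstar]
      simp [Matrix.mulVec, Matrix.transpose_apply, dotProduct]
    have hφ : ∀ k : Fin (M + 1), HasFDerivAt (fun z => ζ (Y z) k)
        ((fderiv ℝ (fun x => ζ x k) (Y y)).comp (fderiv ℝ Y y)) y :=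
      fun k => (((hζ k).differentiable one_ne_zero) (Y y)).hasFDerivAt.comp y (hYd y hy)
    have hZd : ∀ k, HasFDerivAt (fun z => Z z k l) (fderiv ℝ (fun z => Z z k l) y) y :=
      fun k => (((hZ k l).differentiable one_ne_zero) y).hasFDerivAt
    have hsum : HasFDerivAt (fun z => ∑ k : Fin (M + 1), Z z k l * ζ (Y z) k)
        (∑ k : Fin (M + 1), (Z y k l • ((fderiv ℝ (fun x => ζ x k) (Y y)).comp (fderiv ℝ Y y))
          + ζ (Y y) k • fderiv ℝ (fun z => Z z k l) y)) y :=
      HasFDerivAt.fun_sum (fun k _ => (hZd k).mul (hφ k))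
    rw [hfun, hsum.fderiv]
    rw [ContinuousLinearMap.sum_apply]
    refine Finset.sum_congr rfl fun k _ => ?_
    rw [ContinuousLinearMap.add_apply, ContinuousLinearMap.smul_apply,
      ContinuousLinearMap.smul_apply, ContinuousLinearMap.comp_apply,
      smul_eq_mul, smul_eq_mul]
    congr 2
    rw [clm_apply_sum]
    refine Finset.sum_congr rfl fun i _ => ?_
    congr 1
    exact hcomp y hy i j
  have hzval : ∀ l : Fin (M + 1), ζstar y l = ∑ k : Fin (M + 1), Z y k l * ζ (Y y) k := by
    intro l
    rw [hζstar]
    simp [Matrix.mulVec, Matrix.transpose_apply, dotProduct]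
  -- abbreviations
  rw [hdet y hy, abs_of_pos (hJpos y hy), smul_eq_mul, hg]
  simp only [hqrel y hy, hrrel y hy, hzder, hzval]
  -- cancel the Jacobian
  rw [Finset.mul_sum]
  have hcancel : ∀ k : Fin (M + 1),
      J y * ((∑ i : Fin (n + 1), fderiv ℝ (fun z => ζ z k) (Y y) (Pi.single i 1) *
          ((1 / J y) * ∑ j : Fin (n + 1), ∑ l : Fin (M + 1),
            DY y i j * Z y k l * qstar l y j))
        + ζ (Y y) k * ((1 / J y) *
          ((∑ j : Fin (n + 1), ∑ l : Fin (M + 1),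
            fderiv ℝ (fun z => Z z k l) y (Pi.single j 1) * qstar l y j)
           + ∑ l : Fin (M + 1), Z y k l * rstar l y)))
      = (∑ i : Fin (n + 1), fderiv ℝ (fun z => ζ z k) (Y y) (Pi.single i 1) *
          (∑ j : Fin (n + 1), ∑ l : Fin (M + 1), DY y i j * Z y k l * qstar l y j))
        + ζ (Y y) k *
          ((∑ j : Fin (n + 1), ∑ l : Fin (M + 1),
            fderiv ℝ (fun z => Z z k l) y (Pi.single j 1) * qstar l y j)
           + ∑ l : Fin (M + 1), Z y k l * rstar l y) := by
    intro k
    have e1 : (∑ i : Fin (n + 1), fderiv ℝ (fun z => ζ z k) (Y y) (Pi.single i 1) *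
        ((1 / J y) * ∑ j : Fin (n + 1), ∑ l : Fin (M + 1),
          DY y i j * Z y k l * qstar l y j))
        = (1 / J y) * ∑ i : Fin (n + 1), fderiv ℝ (fun z => ζ z k) (Y y) (Pi.single i 1) *
          (∑ j : Fin (n + 1), ∑ l : Fin (M + 1), DY y i j * Z y k l * qstar l y j) := by
      rw [Finset.mul_sum]
      exact Finset.sum_congr rfl fun i _ => by ring
    rw [e1]
    field_simp
  simp only [hcancel]
  exact key_sum (n + 1) (M + 1)
    (fun k i => fderiv ℝ (fun z => ζ z k) (Y y) (Pi.single i 1))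
    (fun k => ζ (Y y) k)
    (fun k l j => fderiv ℝ (fun z => Z z k l) y (Pi.single j 1))
    (fun k l => Z y k l)
    (fun i j => DY y i j)
    (fun l j => qstar l y j)
    (fun l => rstar l y)
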